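/- Let A_1,…,A_k (k ≥ 1) be pairwise commuting V×V matrices with nonnegative integer entries, each with no zero row and no zero column, such that every vertex lies in a nontrivial strongly connected component and every strongly connected component is coordinatewise irreducible. Let r ∈ (0,∞)^k satisfy ρ(A_i) ≤ e^{r_i} for all i. Call a strongly connected component C critical if ρ(A_{C,j}) = e^{r_j} for some j ∈ {1,…,k}; order components by C ≤ D iff some vertex of C reaches some vertex of D, and let 𝒞_mincrit be the set of critical components that are minimal among critical components for this order. Set G := ⋃{C : C ∈ 𝒞_mincrit}, let H' := {w ∈ V : some v ∈ G reaches w} be the hereditary closure of G, and put H := H' \ G. Then: (i) H is hereditary; (ii) for every C ∈ 𝒞_mincrit, if v ∉ H and some vertex of C reaches v, then v ∈ C (i.e. C is hereditary in V \ H); and (iii) every critical component not belonging to 𝒞_mincrit is contained in H. -/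
import Mathlib


open Matrix

variable {V : Type*} [Fintype V] [DecidableEq V]

/-- `Apow A n = ∏ i, (A i)^(n i)`, the vertex matrix counting paths of degree `n`. -/
def Apow {k : ℕ} (A : Fin k → Matrix V V ℕ) (n : Fin k → ℕ) : Matrix V V ℕ :=
  ((List.finRange k).map fun i => (A i) ^ (n i)).prod

/-- `v` reaches `w` if some `A^n` has a positive `(v, w)` entry. -/
def Reaches {k : ℕ} (A : Fin k → Matrix V V ℕ) (v w : V) : Prop :=
  ∃ n : Fin k → ℕ, 0 < Apow A n v w

/-- `C` is a strongly connected component: the equivalence class of some vertex `v`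
for the relation `v` reaches `w` and `w` reaches `v`. -/
def IsSCC {k : ℕ} (A : Fin k → Matrix V V ℕ) (C : Finset V) : Prop :=
  ∃ v : V, ∀ w : V, w ∈ C ↔ (Reaches A v w ∧ Reaches A w v)

/-- A component is nontrivial if it contains a vertex with a loop of nonzero degree. -/
def NontrivialComp {k : ℕ} (A : Fin k → Matrix V V ℕ) (C : Finset V) : Prop :=
  ∃ v ∈ C, ∃ n : Fin k → ℕ, n ≠ 0 ∧ 0 < Apow A n v v

/-- A component is coordinatewise irreducible if for each colour `i` and all `v, w ∈ C`
there is `m ≥ 1` with `(A_i^m)(v, w) > 0`. -/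
def CoordIrreducible {k : ℕ} (A : Fin k → Matrix V V ℕ) (C : Finset V) : Prop :=
  ∀ i : Fin k, ∀ v ∈ C, ∀ w ∈ C, ∃ m : ℕ, 1 ≤ m ∧ 0 < ((A i) ^ m) v w

/-- A subset `S` is hereditary if `v ∈ S` and `v` reaches `w` imply `w ∈ S`. -/
def Hereditary {k : ℕ} (A : Fin k → Matrix V V ℕ) (S : Finset V) : Prop :=
  ∀ v ∈ S, ∀ w : V, Reaches A v w → w ∈ S

/-- The spectral radius of a square matrix of natural numbers: the maximum modulus of
its complex eigenvalues. -/
noncomputable def specRadN {n : Type*} [Fintype n] [DecidableEq n] (M : Matrix n n ℕ) : ℝ :=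
  (spectralRadius ℂ (M.map (Nat.cast : ℕ → ℂ))).toReal

/-- `compRad A C i` is the spectral radius of the `C × C` submatrix of `A i`. -/
noncomputable def compRad {k : ℕ} (A : Fin k → Matrix V V ℕ) (C : Finset V) (i : Fin k) : ℝ :=
  specRadN ((A i).submatrix (fun c : {x // x ∈ C} => c.1) (fun c : {x // x ∈ C} => c.1))

/-- The partial order on components: `C ≤ D` iff some vertex of `C` reaches some vertex
of `D`. -/
def CompLE {V : Type*} [Fintype V] [DecidableEq V] {k : ℕ}
    (A : Fin k → Matrix V V ℕ) (C D : Finset V) : Prop :=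
  ∃ v ∈ C, ∃ w ∈ D, Reaches A v w

/-- A component `C` is critical if `ρ(A_{C,j}) = e^{r_j}` for some colour `j`. -/
def Critical {V : Type*} [Fintype V] [DecidableEq V] {k : ℕ}
    (A : Fin k → Matrix V V ℕ) (r : Fin k → ℝ) (C : Finset V) : Prop :=
  IsSCC A C ∧ ∃ j : Fin k, compRad A C j = Real.exp (r j)

/-- A critical component is minimal if the only critical component below it is itself. -/
def MinCrit {V : Type*} [Fintype V] [DecidableEq V] {k : ℕ}
    (A : Fin k → Matrix V V ℕ) (r : Fin k → ℝ) (C : Finset V) : Prop :=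
  Critical A r C ∧ ∀ C' : Finset V, Critical A r C' → CompLE A C' C → C' = C

/-- `G`: the union of the minimal critical components. -/
def Gset {V : Type*} [Fintype V] [DecidableEq V] {k : ℕ}
    (A : Fin k → Matrix V V ℕ) (r : Fin k → ℝ) : Set V :=
  {v | ∃ C : Finset V, MinCrit A r C ∧ v ∈ C}

/-- `H`: the hereditary closure of `G` minus `G`. -/
def Hset {V : Type*} [Fintype V] [DecidableEq V] {k : ℕ}
    (A : Fin k → Matrix V V ℕ) (r : Fin k → ℝ) : Set V :=
  {w | ∃ v ∈ Gset A r, Reaches A v w} \ Gset A r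

section Aux

variable {k : ℕ}

lemma Apow_zero (A : Fin k → Matrix V V ℕ) : Apow A 0 = 1 := by
  unfold Apow
  simp

lemma Apow_add (A : Fin k → Matrix V V ℕ) (hcomm : ∀ i j, A i * A j = A j * A i)
    (n m : Fin k → ℕ) : Apow A (n + m) = Apow A n * Apow A m := by
  have key : ∀ l : List (Fin k),
      (l.map fun i => (A i) ^ (n i + m i)).prod =
        (l.map fun i => (A i) ^ (n i)).prod * (l.map fun i => (A i) ^ (m i)).prod := by
    intro l
    induction l with
    | nil => simp
    | cons i l ih =>
      rw [List.map_cons, List.map_cons, List.map_cons, List.prod_cons, List.prod_cons,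
        List.prod_cons, ih, pow_add]
      have hc : Commute ((A i) ^ (m i)) ((l.map fun j => (A j) ^ (n j)).prod) := by
        apply Commute.list_prod_right
        intro x hx
        obtain ⟨j, _, rfl⟩ := List.mem_map.1 hx
        exact Commute.pow_pow (hcomm i j) _ _
      rw [mul_assoc, mul_assoc, ← mul_assoc ((A i) ^ (m i)), hc.eq, mul_assoc]
  exact key _

lemma reaches_refl (A : Fin k → Matrix V V ℕ) (v : V) : Reaches A v v :=
  ⟨0, by rw [Apow_zero]; simp [Matrix.one_apply_eq]⟩

lemma reaches_trans (A : Fin k → Matrix V V ℕ) (hcomm : ∀ i j, A i * A j = A j * A i)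
    {u v w : V} (h1 : Reaches A u v) (h2 : Reaches A v w) : Reaches A u w := by
  obtain ⟨n, hn⟩ := h1
  obtain ⟨m, hm⟩ := h2
  refine ⟨n + m, ?_⟩
  rw [Apow_add A hcomm, Matrix.mul_apply]
  exact Finset.sum_pos' (fun x _ => Nat.zero_le _)
    ⟨v, Finset.mem_univ v, Nat.mul_pos hn hm⟩

lemma scc_reaches {A : Fin k → Matrix V V ℕ} (hcomm : ∀ i j, A i * A j = A j * A i)
    {C : Finset V} (hC : IsSCC A C) {u w : V} (hu : u ∈ C) (hw : w ∈ C) :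
    Reaches A u w := by
  obtain ⟨b, hb⟩ := hC
  exact reaches_trans A hcomm ((hb u).1 hu).2 ((hb w).1 hw).1

lemma scc_mem_of {A : Fin k → Matrix V V ℕ} (hcomm : ∀ i j, A i * A j = A j * A i)
    {C : Finset V} (hC : IsSCC A C) {u x : V} (hu : u ∈ C)
    (h1 : Reaches A u x) (h2 : Reaches A x u) : x ∈ C := by
  obtain ⟨b, hb⟩ := hC
  exact (hb x).2 ⟨reaches_trans A hcomm ((hb u).1 hu).1 h1,
    reaches_trans A hcomm h2 ((hb u).1 hu).2⟩

lemma scc_eq_of_mem {A : Fin k → Matrix V V ℕ} (hcomm : ∀ i j, A i * A j = A j * A i)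
    {C D : Finset V} (hC : IsSCC A C) (hD : IsSCC A D) {u : V}
    (huC : u ∈ C) (huD : u ∈ D) : C = D := by
  ext x
  constructor
  · intro hx
    exact scc_mem_of hcomm hD huD (scc_reaches hcomm hC huC hx)
      (scc_reaches hcomm hC hx huC)
  · intro hx
    exact scc_mem_of hcomm hC huC (scc_reaches hcomm hD huD hx)
      (scc_reaches hcomm hD hx huD)

lemma compLE_refl {A : Fin k → Matrix V V ℕ} {C : Finset V} (hC : IsSCC A C) :
    CompLE A C C := by
  obtain ⟨b, hb⟩ := hC
  have hbC : b ∈ C := (hb b).2 ⟨reaches_refl A b, reaches_refl A b⟩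
  exact ⟨b, hbC, b, hbC, reaches_refl A b⟩

lemma compLE_trans {A : Fin k → Matrix V V ℕ} (hcomm : ∀ i j, A i * A j = A j * A i)
    {C D E : Finset V} (hD : IsSCC A D)
    (h1 : CompLE A C D) (h2 : CompLE A D E) : CompLE A C E := by
  obtain ⟨v, hv, w, hw, hvw⟩ := h1
  obtain ⟨v', hv', w', hw', h'⟩ := h2
  exact ⟨v, hv, w', hw',
    reaches_trans A hcomm hvw (reaches_trans A hcomm (scc_reaches hcomm hD hw hv') h')⟩

lemma compLE_antisymm {A : Fin k → Matrix V V ℕ} (hcomm : ∀ i j, A i * A j = A j * A i)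
    {C D : Finset V} (hC : IsSCC A C) (hD : IsSCC A D)
    (h1 : CompLE A C D) (h2 : CompLE A D C) : C = D := by
  obtain ⟨v, hv, w, hw, hvw⟩ := h1
  obtain ⟨v', hv', w', hw', h'⟩ := h2
  have hwv : Reaches A w v :=
    reaches_trans A hcomm (scc_reaches hcomm hD hw hv')
      (reaches_trans A hcomm h' (scc_reaches hcomm hC hw' hv))
  have hwC : w ∈ C := scc_mem_of hcomm hC hv hvw hwv
  exact scc_eq_of_mem hcomm hC hD hwC hw

lemma exists_minCrit_le {A : Fin k → Matrix V V ℕ} (hcomm : ∀ i j, A i * A j = A j * A i)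
    (r : Fin k → ℝ) :
    ∀ N : ℕ, ∀ D : Finset V,
      ({E : Finset V | Critical A r E ∧ CompLE A E D}).ncard ≤ N →
      Critical A r D → ∃ E, MinCrit A r E ∧ CompLE A E D := by
  intro N
  induction N with
  | zero =>
    intro D hcard hD
    exfalso
    have hDin : D ∈ {E : Finset V | Critical A r E ∧ CompLE A E D} :=
      ⟨hD, compLE_refl hD.1⟩
    have : ({E : Finset V | Critical A r E ∧ CompLE A E D}).ncard = 0 :=
      Nat.le_zero.1 hcard
    rw [Set.ncard_eq_zero (Set.toFinite _)] at this
    rw [this] at hDin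
    exact hDin
  | succ N ih =>
    intro D hcard hD
    by_cases hmin : MinCrit A r D
    · exact ⟨D, hmin, compLE_refl hD.1⟩
    · obtain ⟨D', hD', hle, hne⟩ : ∃ D', Critical A r D' ∧ CompLE A D' D ∧ D' ≠ D := by
        by_contra h
        push_neg at h
        exact hmin ⟨hD, fun C' hC' hle => h C' hC' hle⟩
      have hsub : {E : Finset V | Critical A r E ∧ CompLE A E D'} ⊆
          {E : Finset V | Critical A r E ∧ CompLE A E D} \ {D} := by
        intro E ⟨hEcrit, hEle⟩
        refine ⟨⟨hEcrit, compLE_trans hcomm hD'.1 hEle hle⟩, ?_⟩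
        intro hED
        rw [Set.mem_singleton_iff] at hED
        subst hED
        exact hne (compLE_antisymm hcomm hD'.1 hD.1 hle hEle)
      have hDin : D ∈ {E : Finset V | Critical A r E ∧ CompLE A E D} :=
        ⟨hD, compLE_refl hD.1⟩
      have hlt : ({E : Finset V | Critical A r E ∧ CompLE A E D'}).ncard ≤ N := by
        have h1 : ({E : Finset V | Critical A r E ∧ CompLE A E D'}).ncard ≤
            (({E : Finset V | Critical A r E ∧ CompLE A E D}) \ {D}).ncard :=
          Set.ncard_le_ncard hsub (Set.toFinite _)
        have h2 : (({E : Finset V | Critical A r E ∧ CompLE A E D}) \ {D}).ncard + 1 =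
            ({E : Finset V | Critical A r E ∧ CompLE A E D}).ncard :=
          Set.ncard_diff_singleton_add_one hDin (Set.toFinite _)
        omega
      obtain ⟨E, hE, hle'⟩ := ih D' hlt hD'
      exact ⟨E, hE, compLE_trans hcomm hD'.1 hle' hle⟩

end Aux

/-- Combinatorial content of Proposition 3.4: `H` is hereditary, every minimal critical
component is hereditary in `V \ H`, and every non-minimal critical component is contained
in `H`. -/
theorem remove_redundant_components {V : Type*} [Fintype V] [DecidableEq V] [Nonempty V]
    {k : ℕ} (hk : 1 ≤ k)
    (A : Fin k → Matrix V V ℕ)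
    (hcomm : ∀ i j, A i * A j = A j * A i)
    (hrow : ∀ i v, ∃ w, A i v w ≠ 0)
    (hcol : ∀ i v, ∃ w, A i w v ≠ 0)
    (hcover : ∀ v : V, ∃ C : Finset V, IsSCC A C ∧ v ∈ C ∧ NontrivialComp A C)
    (hirr : ∀ C : Finset V, IsSCC A C → CoordIrreducible A C)
    (r : Fin k → ℝ) (hr : ∀ i, 0 < r i)
    (hrad : ∀ i, specRadN (A i) ≤ Real.exp (r i)) :
    (∀ v ∈ Hset A r, ∀ w : V, Reaches A v w → w ∈ Hset A r) ∧
    (∀ C : Finset V, MinCrit A r C →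
      ∀ v : V, v ∉ Hset A r → (∃ u ∈ C, Reaches A u v) → v ∈ C) ∧
    (∀ C : Finset V, Critical A r C → ¬ MinCrit A r C → ∀ v ∈ C, v ∈ Hset A r) := by
  refine ⟨?_, ?_, ?_⟩
  · -- (i) H is hereditary
    rintro v ⟨⟨u, huG, huv⟩, hvG⟩ w hvw
    refine ⟨⟨u, huG, reaches_trans A hcomm huv hvw⟩, ?_⟩
    rintro ⟨C, hCmin, hwC⟩
    obtain ⟨D, hDmin, huD⟩ := huG
    have hDC : CompLE A D C := ⟨u, huD, w, hwC, reaches_trans A hcomm huv hvw⟩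
    have hDeq : D = C := hCmin.2 D hDmin.1 hDC
    subst hDeq
    have hwu : Reaches A w u := scc_reaches hcomm hDmin.1.1 hwC huD
    have hvD : v ∈ D := scc_mem_of hcomm hDmin.1.1 huD huv
      (reaches_trans A hcomm hvw hwu)
    exact hvG ⟨D, hDmin, hvD⟩
  · -- (ii) minimal critical components are hereditary in V \ H
    rintro C hCmin v hvH ⟨u, huC, huv⟩
    have hvH' : v ∈ {w : V | ∃ x ∈ Gset A r, Reaches A x w} :=
      ⟨u, ⟨C, hCmin, huC⟩, huv⟩
    have hvG : v ∈ Gset A r := by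
      by_contra hvG
      exact hvH ⟨hvH', hvG⟩
    obtain ⟨D, hDmin, hvD⟩ := hvG
    have hCD : CompLE A C D := ⟨u, huC, v, hvD, huv⟩
    have : C = D := hDmin.2 C hCmin.1 hCD
    rw [this]
    exact hvD
  · -- (iii) non-minimal critical components are contained in H
    intro C hC hnmin v hvC
    obtain ⟨E, hEmin, hEle⟩ := exists_minCrit_le hcomm r
      ({F : Finset V | Critical A r F ∧ CompLE A F C}).ncard C le_rfl hC
    obtain ⟨e, heE, w, hwC, hew⟩ := hEle
    have hev : Reaches A e v :=
      reaches_trans A hcomm hew (scc_reaches hcomm hC.1 hwC hvC)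
    refine ⟨⟨e, ⟨E, hEmin, heE⟩, hev⟩, ?_⟩
    rintro ⟨F, hFmin, hvF⟩
    have : C = F := scc_eq_of_mem hcomm hC.1 hFmin.1.1 hvC hvF
    rw [this] at hnmin
    exact hnmin hFmin
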